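/- A monotone subspace M ⊆ ℝⁿ × ℝⁿ is maximally monotone if and only if dim M = n. -/

import Mathlib

open Matrix

/-- A subspace `M ⊆ ℝⁿ × ℝⁿ` is monotone if `wᵀv ≥ 0` for all `(v,w) ∈ M`. -/
def IsMonotoneSubspace {n : ℕ} (M : Submodule ℝ ((Fin n → ℝ) × (Fin n → ℝ))) : Prop :=
  ∀ p ∈ M, 0 ≤ p.2 ⬝ᵥ p.1


noncomputable def addMap (n : ℕ) : ((Fin n → ℝ) × (Fin n → ℝ)) →ₗ[ℝ] (Fin n → ℝ) :=
  LinearMap.fst ℝ _ _ + LinearMap.snd ℝ _ _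

lemma addMap_inj {n : ℕ} (M : Submodule ℝ ((Fin n → ℝ) × (Fin n → ℝ)))
    (hM : IsMonotoneSubspace M) :
    Function.Injective ((addMap n).domRestrict M) := by
  rw [← LinearMap.ker_eq_bot]
  rw [eq_bot_iff]
  rintro ⟨p, hp⟩ h
  simp only [LinearMap.mem_ker, LinearMap.domRestrict_apply, addMap,
    LinearMap.add_apply, LinearMap.fst_apply, LinearMap.snd_apply] at h
  have h2 : p.2 = -p.1 := by
    rw [← add_eq_zero_iff_eq_neg, add_comm]; exact h
  have h3 := hM p hp
  rw [h2, neg_dotProduct, le_neg, neg_zero] at h3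
  have h4 : p.1 ⬝ᵥ p.1 = 0 := le_antisymm h3 (Finset.sum_nonneg fun i _ => mul_self_nonneg _)
  have h5 : p.1 = 0 := dotProduct_self_eq_zero.mp h4
  have : p = 0 := by
    ext <;> simp [h5, h2]
  simp only [Submodule.mem_bot]
  exact Subtype.ext this

lemma monotone_finrank_le {n : ℕ} (M : Submodule ℝ ((Fin n → ℝ) × (Fin n → ℝ)))
    (hM : IsMonotoneSubspace M) : Module.finrank ℝ M ≤ n := by
  have := LinearMap.finrank_le_finrank_of_injective (addMap_inj M hM)
  simpa using this

lemma exists_perp {n : ℕ} (V : Submodule ℝ (Fin n → ℝ)) (h : Module.finrank ℝ V < n) :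
    ∃ u : Fin n → ℝ, u ≠ 0 ∧ ∀ x ∈ V, u ⬝ᵥ x = 0 := by
  let V' : Submodule ℝ (EuclideanSpace ℝ (Fin n)) := V.map ((WithLp.linearEquiv 2 ℝ (Fin n → ℝ)).symm : (Fin n → ℝ) →ₗ[ℝ] EuclideanSpace ℝ (Fin n))
  have hne : V' ≠ ⊤ := by
    intro hV
    have : Module.finrank ℝ V' = n := by
      rw [hV]; simp [finrank_top]
    have h2 : Module.finrank ℝ V' = Module.finrank ℝ V := LinearEquiv.finrank_map_eq _ _
    omega
  have : V'ᗮ ≠ ⊥ := by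
    rwa [ne_eq, Submodule.orthogonal_eq_bot_iff]
  obtain ⟨u, hu, hu0⟩ := Submodule.exists_mem_ne_zero_of_ne_bot this
  refine ⟨u.ofLp, by simpa using hu0, fun x hx => ?_⟩
  have := (Submodule.mem_orthogonal _ _).mp hu (WithLp.toLp 2 x) ⟨x, hx, rfl⟩
  simpa [dotProduct, PiLp.inner_apply, RCLike.inner_apply, mul_comm] using this

/-- A monotone subspace is maximally monotone (no monotone subspace strictly contains it)
if and only if its dimension equals n. -/
theorem maximally_monotone_iff_finrank_eq {n : ℕ}
    (M : Submodule ℝ ((Fin n → ℝ) × (Fin n → ℝ))) (hM : IsMonotoneSubspace M) :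
    (∀ M' : Submodule ℝ ((Fin n → ℝ) × (Fin n → ℝ)),
      IsMonotoneSubspace M' → M ≤ M' → M' = M) ↔ Module.finrank ℝ M = n := by
  constructor
  · intro hmax
    by_contra hne
    have hlt : Module.finrank ℝ M < n := lt_of_le_of_ne (monotone_finrank_le M hM) hne
    set V := M.map (addMap n) with hV
    have hVlt : Module.finrank ℝ V < n :=
      lt_of_le_of_lt (Submodule.finrank_map_le _ _) hlt
    obtain ⟨u, hu0, hu⟩ := exists_perp V hVlt
    set q : (Fin n → ℝ) × (Fin n → ℝ) := (u, u) with hq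
    set M' := M ⊔ (Submodule.span ℝ {q}) with hM'
    have hmono : IsMonotoneSubspace M' := by
      intro p hp
      rw [hM', Submodule.mem_sup] at hp
      obtain ⟨m, hm, z, hz, hmz⟩ := hp
      rw [Submodule.mem_span_singleton] at hz
      obtain ⟨t, ht⟩ := hz
      have hperp : u ⬝ᵥ (m.1 + m.2) = 0 := by
        apply hu
        exact Submodule.mem_map_of_mem hm
      have hp1 : p.1 = m.1 + t • u := by rw [← hmz, ← ht]; rfl
      have hp2 : p.2 = m.2 + t • u := by rw [← hmz, ← ht]; rfl
      rw [hp1, hp2]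
      have expand : (m.2 + t • u) ⬝ᵥ (m.1 + t • u)
          = m.2 ⬝ᵥ m.1 + t * (u ⬝ᵥ (m.1 + m.2)) + t * t * (u ⬝ᵥ u) := by
        simp only [add_dotProduct, dotProduct_add, smul_dotProduct, dotProduct_smul,
          smul_eq_mul]
        rw [dotProduct_comm m.2 u]
        ring
      rw [expand, hperp]
      have h1 := hM m hm
      have h2 : (0:ℝ) ≤ u ⬝ᵥ u := Finset.sum_nonneg fun i _ => mul_self_nonneg _
      nlinarith
    have heq : M' = M := hmax M' hmono le_sup_left
    have hqM : q ∈ M := by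
      rw [← heq, hM']
      exact Submodule.mem_sup_right (Submodule.mem_span_singleton_self q)
    have : u ⬝ᵥ (q.1 + q.2) = 0 := hu _ (Submodule.mem_map_of_mem hqM)
    have huu : u ⬝ᵥ u = 0 := by
      have : u ⬝ᵥ (u + u) = 0 := this
      rw [dotProduct_add] at this
      linarith [Finset.sum_nonneg (fun i (_ : i ∈ Finset.univ) => mul_self_nonneg (u i))]
    exact hu0 (dotProduct_self_eq_zero.mp huu)
  · intro hrank M' hmono hle
    apply (Submodule.eq_of_le_of_finrank_le hle ?_).symm
    rw [hrank]
    exact monotone_finrank_le M' hmono
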